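/- The 4×4 matrix C with rows (-11/6, -1/3, 1/6, -1/3), (3, -1/2, -1, 3/2), (-3/2, 1, 1/2, -3), (1/3, -1/6, 1/3, 11/6) has rank 3; in particular C is singular (its determinant is zero). -/

import Mathlib

theorem boundary_matrix_rank_three :
    (!![-11/6, -1/3, 1/6, -1/3;
        3, -1/2, -1, 3/2;
        -3/2, 1, 1/2, -3;
        1/3, -1/6, 1/3, 11/6] : Matrix (Fin 4) (Fin 4) ℝ).rank = 3 ∧
    (!![-11/6, -1/3, 1/6, -1/3;
        3, -1/2, -1, 3/2;
        -3/2, 1, 1/2, -3;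
        1/3, -1/6, 1/3, 11/6] : Matrix (Fin 4) (Fin 4) ℝ).det = 0 := by
  set C : Matrix (Fin 4) (Fin 4) ℝ :=
    !![-11/6, -1/3, 1/6, -1/3;
        3, -1/2, -1, 3/2;
        -3/2, 1, 1/2, -3;
        1/3, -1/6, 1/3, 11/6] with hC
  have hdet : C.det = 0 := by
    rw [hC, Matrix.det_succ_row_zero]
    simp [Fin.sum_univ_succ, Matrix.det_fin_three, Fin.succAbove, Matrix.submatrix]
    norm_num
  refine ⟨?_, hdet⟩
  -- upper bound: C = A * B with B a 3×4 matrix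
  have hle : C.rank ≤ 3 := by
    have hfac : C = (!![-11/6, -1/3, 1/6;
                        3, -1/2, -1;
                        -3/2, 1, 1/2;
                        1/3, -1/6, 1/3] : Matrix (Fin 4) (Fin 3) ℝ) *
                    (!![1,0,0,1; 0,1,0,-3; 0,0,1,3] : Matrix (Fin 3) (Fin 4) ℝ) := by
      ext i j
      fin_cases i <;> fin_cases j <;>
        simp [hC, Matrix.mul_apply, Fin.sum_univ_succ] <;> norm_num
    calc C.rank ≤ (!![1,0,0,1; 0,1,0,-3; 0,0,1,3] : Matrix (Fin 3) (Fin 4) ℝ).rank := by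
            rw [hfac]; exact Matrix.rank_mul_le_right _ _
      _ ≤ Fintype.card (Fin 3) := Matrix.rank_le_card_height _
      _ = 3 := by simp
  -- lower bound: P * C * Q is invertible 3×3
  have hge : 3 ≤ C.rank := by
    set P : Matrix (Fin 3) (Fin 4) ℝ := !![1,0,0,0; 0,1,0,0; 0,0,1,0] with hP
    set Q : Matrix (Fin 4) (Fin 3) ℝ := !![1,0,0; 0,1,0; 0,0,1; 0,0,0] with hQ
    have hPCQ : P * C * Q = !![-11/6, -1/3, 1/6;
                               3, -1/2, -1;
                               -3/2, 1, 1/2] := by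
      ext i j
      fin_cases i <;> fin_cases j <;>
        simp [hP, hQ, hC, Matrix.mul_apply, Fin.sum_univ_succ] <;> norm_num
    have hdet3 : (P * C * Q).det ≠ 0 := by
      rw [hPCQ, Matrix.det_fin_three]
      simp only [Matrix.of_apply, Matrix.cons_val', Matrix.cons_val_zero, Matrix.cons_val_one, Matrix.cons_val_two, Matrix.head_cons, Matrix.tail_cons, Matrix.empty_val']
      norm_num
    have hunit : IsUnit (P * C * Q) := by
      rw [Matrix.isUnit_iff_isUnit_det]
      exact isUnit_iff_ne_zero.mpr hdet3
    have h3 : (P * C * Q).rank = 3 := by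
      rw [Matrix.rank_of_isUnit _ hunit]; simp
    calc (3 : ℕ) = (P * C * Q).rank := h3.symm
      _ ≤ (C * Q).rank := by rw [Matrix.mul_assoc]; exact Matrix.rank_mul_le_right _ _
      _ ≤ C.rank := Matrix.rank_mul_le_left _ _
  omega
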